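/- Let f(x) = xQxᵗ + Lxᵗ be quadratic on Z_2^n and let T be the unitary on C^{2^n}⊗C^{2^n} defined by T|x,y⟩ = 2^{-n/2} Σ_z (-1)^{z·y}|x+y, z⟩. Then applying T to |ψ⟩⊗|ψ⟩, where |ψ⟩ = 2^{-n/2} Σ_x (-1)^{f(x)}|x⟩, yields 2^{-n/2} Σ_u (-1)^{uQᵗuᵗ + L·u} |u, u(Q+Qᵗ)⟩. -/

import Mathlib

open Finset Matrix

/-- The phase state `|ψ⟩ = 2^(-n/2) Σ_x (-1)^(f x) |x⟩` of a Boolean function `f`,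
as a vector in `ℂ^(2^n)` indexed by `Z_2^n`. -/
noncomputable def phaseState {n : ℕ} (f : (Fin n → ZMod 2) → ZMod 2)
    (x : Fin n → ZMod 2) : ℂ :=
  ((Real.sqrt 2 ^ n : ℝ) : ℂ)⁻¹ * (-1 : ℂ) ^ ((f x).val)

lemma chi_add (a b : ZMod 2) : (-1:ℂ)^((a+b).val) = (-1:ℂ)^a.val * (-1:ℂ)^b.val := by
  rcases (by decide : ∀ a : ZMod 2, a = 0 ∨ a = 1) a with rfl | rfl <;>
  rcases (by decide : ∀ a : ZMod 2, a = 0 ∨ a = 1) b with rfl | rfl <;>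
    norm_num [show ZMod.val (2:ZMod 2) = 0 from rfl, show ZMod.val (1:ZMod 2) = 1 from rfl]

lemma chi_one_add (a : ZMod 2) : (-1:ℂ)^(((1:ZMod 2)+a).val) = -((-1:ℂ)^a.val) := by
  rcases (by decide : ∀ a : ZMod 2, a = 0 ∨ a = 1) a with rfl | rfl <;>
    norm_num [show ZMod.val (2:ZMod 2) = 0 from rfl, show ZMod.val (1:ZMod 2) = 1 from rfl]

lemma char_sum (n : ℕ) (s : Fin n → ZMod 2) :
    ∑ y : Fin n → ZMod 2, (-1:ℂ)^((s ⬝ᵥ y).val) = if s = 0 then (2:ℂ)^n else 0 := by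
  by_cases hs : s = 0
  · simp [hs, Finset.card_univ]
  · simp only [hs, if_false]
    obtain ⟨i, hi⟩ : ∃ i, s i ≠ 0 := by
      by_contra h; push_neg at h; exact hs (funext h)
    have h1 : s i = 1 := by revert hi; generalize s i = a; revert a; decide
    have key : ∑ y : Fin n → ZMod 2, (-1:ℂ)^((s ⬝ᵥ y).val)
        = -∑ y : Fin n → ZMod 2, (-1:ℂ)^((s ⬝ᵥ y).val) := by
      nth_rewrite 1 [← Equiv.sum_comp (Equiv.addLeft (Pi.single i (1:ZMod 2)))]
      rw [← Finset.sum_neg_distrib]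
      refine Finset.sum_congr rfl fun y _ => ?_
      have : s ⬝ᵥ (Pi.single i (1:ZMod 2) + y) = 1 + s ⬝ᵥ y := by
        rw [dotProduct_add, dotProduct_single]
        simp [h1]
      simp only [Equiv.coe_addLeft, this, chi_one_add]
    linear_combination key / 2


/-- Applying `T : |x,y⟩ ↦ 2^(-n/2) Σ_z (-1)^(z·y) |x+y, z⟩` to `|ψ⟩ ⊗ |ψ⟩` for the
quadratic function `f(x) = x Q xᵗ + L xᵗ` yields
`2^(-n/2) Σ_u (-1)^(u Qᵗ uᵗ + L·u) |u, u(Q+Qᵗ)⟩`: componentwise, for every `(u,z)` the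
amplitude of `T(|ψ⟩⊗|ψ⟩)` equals the amplitude of the latter state. -/
theorem T_on_quadratic_state (n : ℕ) (Q : Matrix (Fin n) (Fin n) (ZMod 2))
    (L : Fin n → ZMod 2) (hQ : ∀ i j : Fin n, j ≤ i → Q i j = 0)
    (u z : Fin n → ZMod 2) :
    ((Real.sqrt 2 ^ n : ℝ) : ℂ)⁻¹ *
        ∑ x : Fin n → ZMod 2, ∑ y : Fin n → ZMod 2,
          (if u = x + y then (-1 : ℂ) ^ ((z ⬝ᵥ y).val) else 0) *
            phaseState (fun v => v ⬝ᵥ Q.mulVec v + L ⬝ᵥ v) x *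
            phaseState (fun v => v ⬝ᵥ Q.mulVec v + L ⬝ᵥ v) y
      = ((Real.sqrt 2 ^ n : ℝ) : ℂ)⁻¹ *
          (if z = Matrix.vecMul u (Q + Qᵀ)
            then (-1 : ℂ) ^ ((u ⬝ᵥ Qᵀ.mulVec u + L ⬝ᵥ u).val) else 0) := by
  classical
  set c : ℂ := ((Real.sqrt 2 ^ n : ℝ) : ℂ)⁻¹ with hc
  set f : (Fin n → ZMod 2) → ZMod 2 := fun v => v ⬝ᵥ Q.mulVec v + L ⬝ᵥ v with hfdef
  have hZ : ∀ a b cc : ZMod 2, a = b + cc → b = a + cc := by decide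
  have hZ2 : ∀ a b : ZMod 2, a + b + b = a := by decide
  have h2 : (2 : ZMod 2) = 0 := rfl
  -- constants
  have hr : (Real.sqrt 2 ^ n) * (Real.sqrt 2 ^ n) = 2^n := by
    rw [← mul_pow, Real.mul_self_sqrt (by norm_num)]
  have hcc : c * c * (2:ℂ)^n = 1 := by
    rw [hc, ← mul_inv]
    have hcast : ((Real.sqrt 2 ^ n : ℝ) : ℂ) * ((Real.sqrt 2 ^ n : ℝ) : ℂ) = (2:ℂ)^n := by
      rw [← Complex.ofReal_mul, hr]; push_cast; ring
    rw [hcast]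
    exact inv_mul_cancel₀ (pow_ne_zero _ two_ne_zero)
  -- exponent identity
  have hexp : ∀ y : Fin n → ZMod 2,
      z ⬝ᵥ y + ((u + y) ⬝ᵥ Q.mulVec (u + y) + L ⬝ᵥ (u + y)) + (y ⬝ᵥ Q.mulVec y + L ⬝ᵥ y)
      = (u ⬝ᵥ Qᵀ.mulVec u + L ⬝ᵥ u) + (z + Matrix.vecMul u (Q + Qᵀ)) ⬝ᵥ y := by
    intro y
    have e1 : (u + y) ⬝ᵥ Q.mulVec (u + y)
        = u ⬝ᵥ Q.mulVec u + u ⬝ᵥ Q.mulVec y + y ⬝ᵥ Q.mulVec u + y ⬝ᵥ Q.mulVec y := by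
      rw [add_dotProduct, Matrix.mulVec_add, dotProduct_add,
        dotProduct_add]
      ring
    have e2 : L ⬝ᵥ (u + y) = L ⬝ᵥ u + L ⬝ᵥ y := dotProduct_add _ _ _
    have e3 : u ⬝ᵥ Qᵀ.mulVec u = u ⬝ᵥ Q.mulVec u := by
      rw [Matrix.mulVec_transpose, dotProduct_comm, ← Matrix.dotProduct_mulVec]
    have e4 : (z + Matrix.vecMul u (Q + Qᵀ)) ⬝ᵥ y
        = z ⬝ᵥ y + u ⬝ᵥ Q.mulVec y + y ⬝ᵥ Q.mulVec u := by
      rw [add_dotProduct, Matrix.vecMul_add, add_dotProduct,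
        ← Matrix.dotProduct_mulVec, Matrix.vecMul_transpose,
        dotProduct_comm (Q.mulVec u) y, Matrix.dotProduct_mulVec,
        ← Matrix.dotProduct_mulVec]
      ring
    rw [e1, e2, e3, e4]
    linear_combination (y ⬝ᵥ Q.mulVec y + L ⬝ᵥ y) * h2
  rw [Finset.sum_comm]
  have step1 : ∀ y : Fin n → ZMod 2,
      (∑ x : Fin n → ZMod 2,
        (if u = x + y then (-1:ℂ)^((z ⬝ᵥ y).val) else 0) * phaseState f x * phaseState f y)
      = (-1:ℂ)^((z ⬝ᵥ y).val) * phaseState f (u + y) * phaseState f y := by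
    intro y
    rw [Finset.sum_eq_single (u + y)]
    · have hpos : u = u + y + y := by funext i; exact (hZ2 (u i) (y i)).symm
      rw [if_pos hpos]
    · intro x _ hx
      rw [if_neg, zero_mul, zero_mul]
      intro h; exact hx (funext fun i => hZ _ _ _ (congrFun h i))
    · intro h; exact absurd (Finset.mem_univ _) h
  simp only [step1]
  have step2 : ∀ y : Fin n → ZMod 2,
      (-1:ℂ)^((z ⬝ᵥ y).val) * phaseState f (u + y) * phaseState f y
      = (c * c * (-1:ℂ)^((u ⬝ᵥ Qᵀ.mulVec u + L ⬝ᵥ u).val)) *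
        (-1:ℂ)^(((z + Matrix.vecMul u (Q + Qᵀ)) ⬝ᵥ y).val) := by
    intro y
    have hx' : (-1:ℂ)^((z ⬝ᵥ y).val) * (-1:ℂ)^((f (u+y)).val) * (-1:ℂ)^((f y).val)
        = (-1:ℂ)^((u ⬝ᵥ Qᵀ.mulVec u + L ⬝ᵥ u).val) *
          (-1:ℂ)^(((z + Matrix.vecMul u (Q + Qᵀ)) ⬝ᵥ y).val) := by
      rw [← chi_add, ← chi_add, ← chi_add]
      exact congrArg (fun t : ZMod 2 => (-1:ℂ)^t.val) (hexp y)
    simp only [phaseState, ← hc]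
    calc (-1:ℂ)^((z ⬝ᵥ y).val) * (c * (-1:ℂ)^((f (u+y)).val)) * (c * (-1:ℂ)^((f y).val))
        = c * c * ((-1:ℂ)^((z ⬝ᵥ y).val) * (-1:ℂ)^((f (u+y)).val) * (-1:ℂ)^((f y).val)) := by
          ring
      _ = _ := by rw [hx']; ring
  simp only [step2]
  rw [← Finset.mul_sum, char_sum]
  have hiff : (z + Matrix.vecMul u (Q + Qᵀ) = 0) ↔ (z = Matrix.vecMul u (Q + Qᵀ)) := by
    have hZ3 : ∀ a b : ZMod 2, (a + b = 0) ↔ (a = b) := by decide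
    rw [funext_iff, funext_iff]
    exact forall_congr' fun i => hZ3 (z i) (Matrix.vecMul u (Q + Qᵀ) i)
  by_cases hzw : z = Matrix.vecMul u (Q + Qᵀ)
  · rw [if_pos (hiff.mpr hzw), if_pos hzw]
    linear_combination (c * (-1:ℂ)^((u ⬝ᵥ Qᵀ.mulVec u + L ⬝ᵥ u).val)) * hcc
  · rw [if_neg (fun h => hzw (hiff.mp h)), if_neg hzw]
    ring
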